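/- arXiv:2506.03612 — 3 statements merged into one kernel-verified Lean document; each statement's English description precedes it below -/
import Mathlib

section
/- Let G be a connected graph with nonadjacent vertices s,t, and let A ⊆ V(G) be such that G[{s}∪A] is connected and ({s}∪A) ∩ N_G[t] = ∅. Then N_G({s}∪A) contains exactly one minimal s,t-separator of G. -/
variable {V : Type*}

/-- Reachability in `G` by a walk avoiding the vertex set `S`. -/
def ReachAvoid (G : SimpleGraph V) (S : Set V) (u v : V) : Prop :=
  ∃ w : G.Walk u v, ∀ x ∈ w.support, x ∉ S

/-- The connected component of `G − S` containing `s`, as a subset of `V`. -/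
def compOf (G : SimpleGraph V) (S : Set V) (s : V) : Set V :=
  {v | ReachAvoid G S s v}

/-- `S` is an `s,t`-separator of `G`. -/
def IsSep (G : SimpleGraph V) (s t : V) (S : Set V) : Prop :=
  s ∉ S ∧ t ∉ S ∧ ¬ ReachAvoid G S s t

/-- `S` is a minimal `s,t`-separator of `G`. -/
def IsMinSep (G : SimpleGraph V) (s t : V) (S : Set V) : Prop :=
  IsSep G s t S ∧ ∀ S' ⊂ S, ¬ IsSep G s t S'

/-- The open neighborhood of a vertex set `X`. -/
def nbhd (G : SimpleGraph V) (X : Set V) : Set V :=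
  {v | v ∉ X ∧ ∃ x ∈ X, G.Adj x v}

/-- The closed neighborhood of a vertex `v`. -/
def clNbhd (G : SimpleGraph V) (v : V) : Set V :=
  insert v (G.neighborSet v)

/-- `S` is a minimal `s,t`-separator close to `sA`. -/
def CloseTo (G : SimpleGraph V) (s t : V) (A : Set V) (S : Set V) : Prop :=
  IsMinSep G s t S ∧ A ⊆ compOf G S s ∧
    ∀ T, IsMinSep G s t T → T ≠ S → A ⊆ compOf G T s →
      ¬ compOf G T s ⊆ compOf G S s

/-- `G` contains no asteroidal triple. -/
def IsATFree (G : SimpleGraph V) : Prop :=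
  ¬ ∃ a b c : V, a ≠ b ∧ a ≠ c ∧ b ≠ c ∧
    ¬ G.Adj a b ∧ ¬ G.Adj a c ∧ ¬ G.Adj b c ∧
    (∃ w : G.Walk a b, ∀ x ∈ w.support, x ∉ clNbhd G c) ∧
    (∃ w : G.Walk a c, ∀ x ∈ w.support, x ∉ clNbhd G b) ∧
    (∃ w : G.Walk b c, ∀ x ∈ w.support, x ∉ clNbhd G a)

/-- `S` is an `A,B`-separator. -/
def IsABSep (G : SimpleGraph V) (A B : Set V) (S : Set V) : Prop :=
  S ⊆ (A ∪ B)ᶜ ∧ ∀ a ∈ A, ∀ b ∈ B, ¬ ReachAvoid G S a b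

/-- `S` is a minimal `A,B`-separator. -/
def IsMinABSep (G : SimpleGraph V) (A B S : Set V) : Prop :=
  IsABSep G A B S ∧ ∀ S' ⊂ S, ¬ IsABSep G A B S'

/-- `S` is a safe (connectivity-preserving) `A,B`-separator: removing `S`
leaves two distinct components, one containing `A` and one containing `B`. -/
def IsSafeSep (G : SimpleGraph V) (A B S : Set V) : Prop :=
  S ⊆ (A ∪ B)ᶜ ∧ ∃ a b : V, a ∉ S ∧ b ∉ S ∧
    A ⊆ compOf G S a ∧ B ⊆ compOf G S b ∧
    Disjoint (compOf G S a) (compOf G S b)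

/-- The induced subgraph on `X` is connected (any two vertices of `X` are joined
by a walk staying in `X`). -/
def ConnIn (G : SimpleGraph V) (X : Set V) : Prop :=
  ∀ x ∈ X, ∀ y ∈ X, ∃ w : G.Walk x y, ∀ z ∈ w.support, z ∈ X

/-- The graph obtained from `G` by contracting `{s} ∪ A` to the vertex `s`
(the vertices of `A` become isolated). -/
def contractGraph (G : SimpleGraph V) (s : V) (A : Set V) : SimpleGraph V where
  Adj u v := u ∉ A ∧ v ∉ A ∧ u ≠ v ∧
    (G.Adj u v ∨ (u = s ∧ ∃ a ∈ A, G.Adj a v) ∨ (v = s ∧ ∃ a ∈ A, G.Adj a u))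
  symm := by
    constructor
    rintro u v ⟨hu, hv, hne, h⟩
    refine ⟨hv, hu, hne.symm, ?_⟩
    rcases h with h | h | h
    · exact Or.inl h.symm
    · exact Or.inr (Or.inr h)
    · exact Or.inr (Or.inl h)
  loopless := by
    constructor
    rintro u ⟨_, _, hne, _⟩
    exact hne rfl

/-- The graph obtained from `G` by adding all edges from `s` to `N_G[A]`. -/
def addApex (G : SimpleGraph V) (s : V) (A : Set V) : SimpleGraph V where
  Adj u v := G.Adj u v ∨
    (u = s ∧ v ≠ s ∧ v ∈ A ∪ nbhd G A) ∨
    (v = s ∧ u ≠ s ∧ u ∈ A ∪ nbhd G A)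
  symm := by
    constructor
    rintro u v (h | h | h)
    · exact Or.inl h.symm
    · exact Or.inr (Or.inr h)
    · exact Or.inr (Or.inl h)
  loopless := by
    constructor
    rintro u (h | ⟨h1, h2, _⟩ | ⟨h1, h2, _⟩)
    · exact G.loopless.irrefl u h
    · exact h2 h1
    · exact h2 h1

/-- The graph obtained from `G` by subdividing every edge. -/
def subdiv (G : SimpleGraph V) : SimpleGraph (V ⊕ G.edgeSet) where
  Adj x y :=
    match x, y with
    | Sum.inl u, Sum.inr e => u ∈ (e : Sym2 V)
    | Sum.inr e, Sum.inl u => u ∈ (e : Sym2 V)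
    | _, _ => False
  symm := by
    constructor
    rintro (u | e) (v | f) h <;> exact h
  loopless := by
    constructor
    rintro (u | e) h <;> exact h

/-- The instance `2Dis(G,A,B)` of 2-Disjoint-Connected-Subgraphs has a solution. -/
def TwoDisSolvable (G : SimpleGraph V) (A B : Set V) : Prop :=
  ∃ A₁ B₁ : Set V, Disjoint A₁ B₁ ∧ A ⊆ A₁ ∧ B ⊆ B₁ ∧
    ConnIn G A₁ ∧ ConnIn G B₁

lemma ReachAvoid.trans' {G : SimpleGraph V} {S : Set V} {u v w : V}
    (h1 : ReachAvoid G S u v) (h2 : ReachAvoid G S v w) : ReachAvoid G S u w := by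
  obtain ⟨p, hp⟩ := h1; obtain ⟨q, hq⟩ := h2
  refine ⟨p.append q, fun x hx => ?_⟩
  rcases (SimpleGraph.Walk.mem_support_append_iff _ _).1 hx with h | h
  · exact hp x h
  · exact hq x h

lemma ReachAvoid.symm' {G : SimpleGraph V} {S : Set V} {u v : V}
    (h1 : ReachAvoid G S u v) : ReachAvoid G S v u := by
  obtain ⟨p, hp⟩ := h1
  exact ⟨p.reverse, fun x hx => hp x (by simpa using hx)⟩

lemma ReachAvoid.mono' {G : SimpleGraph V} {S T : Set V} {u v : V}
    (hST : T ⊆ S) (h1 : ReachAvoid G S u v) : ReachAvoid G T u v := by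
  obtain ⟨p, hp⟩ := h1
  exact ⟨p, fun x hx hxT => hp x hx (hST hxT)⟩

lemma reachAvoid_adj {G : SimpleGraph V} {S : Set V} {u v : V}
    (h : G.Adj u v) (hu : u ∉ S) (hv : v ∉ S) : ReachAvoid G S u v := by
  refine ⟨SimpleGraph.Walk.cons h SimpleGraph.Walk.nil, fun x hx => ?_⟩
  simp only [SimpleGraph.Walk.support_cons, SimpleGraph.Walk.support_nil,
    List.mem_cons, List.mem_singleton] at hx
  rcases hx with rfl | rfl | h'
  · exact hu
  · exact hv
  · exact absurd h' (by simp)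

lemma reachAvoid_notMem_left {G : SimpleGraph V} {S : Set V} {u v : V}
    (h : ReachAvoid G S u v) : u ∉ S := by
  obtain ⟨p, hp⟩ := h
  exact hp u p.start_mem_support

lemma reachAvoid_notMem_right {G : SimpleGraph V} {S : Set V} {u v : V}
    (h : ReachAvoid G S u v) : v ∉ S := by
  obtain ⟨p, hp⟩ := h
  exact hp v p.end_mem_support

/-- A walk from inside `C` to outside `C` crosses the boundary of `C`. -/
lemma exists_boundary {G : SimpleGraph V} {C : Set V} {u v : V} (w : G.Walk u v)
    (hu : u ∈ C) (hv : v ∉ C) :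
    ∃ x y, x ∈ C ∧ y ∉ C ∧ G.Adj x y ∧ x ∈ w.support ∧ y ∈ w.support := by
  revert hu hv
  induction w with
  | nil => intro hu hv; exact absurd hu hv
  | @cons a b c h p ih =>
    intro hu hv
    by_cases hb : b ∈ C
    · obtain ⟨x, y, hx, hy, hxy, hxs, hys⟩ := ih hb hv
      exact ⟨x, y, hx, hy, hxy, by simp [hxs], by simp [hys]⟩
    · exact ⟨a, b, hu, hb, h, by simp, by simp⟩

theorem stmt3 (G : SimpleGraph V) (hconn : G.Connected) (s t : V)
    (hst : s ≠ t) (hadj : ¬ G.Adj s t) (A : Set V)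
    (hconnA : ConnIn G (insert s A))
    (hAt : insert s A ∩ clNbhd G t = ∅) :
    ∃! S : Set V, IsMinSep G s t S ∧ S ⊆ nbhd G (insert s A) := by
  set X : Set V := insert s A with hX
  set N : Set V := nbhd G X with hN
  -- basic facts
  have hsX : s ∈ X := Set.mem_insert _ _
  have htX : t ∉ X := fun ht =>
    Set.eq_empty_iff_forall_notMem.1 hAt t ⟨ht, Set.mem_insert _ _⟩
  have hXN : ∀ x ∈ X, x ∉ N := fun x hx hxN => hxN.1 hx
  have htN : t ∉ N := by
    rintro ⟨ht, x, hxX, hxt⟩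
    exact Set.eq_empty_iff_forall_notMem.1 hAt x
      ⟨hxX, Set.mem_insert_iff.2 (Or.inr (by simpa using hxt.symm))⟩
  -- N is an s,t-separator
  have hNsep : ¬ ReachAvoid G N s t := by
    rintro ⟨w, hw⟩
    obtain ⟨x, y, hx, hy, hxy, _, hys⟩ := exists_boundary (C := X) w hsX htX
    exact hw y hys ⟨hy, x, hx, hxy⟩
  -- D : the component of t in G − N
  set D : Set V := compOf G N t with hD
  have htD : t ∈ D := ⟨SimpleGraph.Walk.nil, by simpa using htN⟩
  have hDN : ∀ d ∈ D, d ∉ N := fun d hd => reachAvoid_notMem_right hd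
  have hDadj : ∀ d ∈ D, ∀ w, G.Adj d w → w ∉ N → w ∈ D := fun d hd w hdw hwN =>
    ReachAvoid.trans' hd (reachAvoid_adj hdw (hDN d hd) hwN)
  have hsD : s ∉ D := fun hs => hNsep (ReachAvoid.symm' hs)
  -- The candidate separator
  set S : Set V := {v | v ∈ N ∧ ∃ d ∈ D, G.Adj v d} with hS
  have hSN : S ⊆ N := fun v hv => hv.1
  have hsS : s ∉ S := fun h => hXN s hsX (hSN h)
  have htS : t ∉ S := fun h => htN (hSN h)
  have hDS : ∀ d ∈ D, d ∉ S := fun d hd hdS => hDN d hd (hSN hdS)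
  have hXS : ∀ x ∈ X, x ∉ S := fun x hx hxS => hXN x hx (hSN hxS)
  -- S separates s and t
  have hSsep : ¬ ReachAvoid G S s t := by
    rintro ⟨w, hw⟩
    obtain ⟨x, y, hx, hy, hxy, _, hys⟩ :=
      exists_boundary (C := D) w.reverse (by simpa using htD) (by simpa using hsD)
    have hyN : y ∈ N := by
      by_contra hyN
      exact hy (hDadj x hx y hxy hyN)
    exact hw y (by simpa using hys) ⟨hyN, x, hx, hxy.symm⟩
  -- For every v ∈ S and every T ⊆ N not containing v, s reaches t avoiding T
  have key : ∀ T ⊆ N, ∀ v ∈ S, v ∉ T → ReachAvoid G T s t := by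
    intro T hTN v hv hvT
    obtain ⟨⟨hvX, x, hxX, hxv⟩, d, hdD, hvd⟩ := hv
    have hXT : ∀ z ∈ X, z ∉ T := fun z hz hzT => hXN z hz (hTN hzT)
    -- s to x inside X
    obtain ⟨w1, hw1⟩ := hconnA s hsX x hxX
    have r1 : ReachAvoid G T s x := ⟨w1, fun z hz hzT => hXT z (hw1 z hz) hzT⟩
    -- x to v
    have r2 : ReachAvoid G T x v := reachAvoid_adj hxv (hXT x hxX) hvT
    -- v to d
    have r3 : ReachAvoid G T v d :=
      reachAvoid_adj hvd hvT (fun hdT => hDN d hdD (hTN hdT))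
    -- d to t (avoiding N ⊇ T)
    have r4 : ReachAvoid G T d t := ReachAvoid.symm' (ReachAvoid.mono' hTN hdD)
    exact ((r1.trans' r2).trans' r3).trans' r4
  -- S is a minimal separator
  have hSmin : IsMinSep G s t S := by
    refine ⟨⟨hsS, htS, hSsep⟩, ?_⟩
    rintro S' hS' ⟨_, _, hreach⟩
    obtain ⟨v, hvS, hvS'⟩ := Set.exists_of_ssubset hS'
    exact hreach (key S' (hS'.subset.trans hSN) v hvS hvS')
  -- uniqueness
  refine ⟨S, ⟨hSmin, hSN⟩, ?_⟩
  rintro T ⟨⟨⟨hsT, htT, hTreach⟩, hTmin⟩, hTN⟩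
  have hST : S ⊆ T := by
    intro v hv
    by_contra hvT
    exact hTreach (key T hTN v hv hvT)
  rcases eq_or_ne T S with h | h
  · exact h
  · exact absurd ⟨hsS, htS, hSsep⟩ (hTmin S ⟨hST, fun hTS => h (Set.Subset.antisymm hTS hST)⟩)
end

section
/- Let G be a connected AT-free graph, s,t nonadjacent vertices, and T_s a minimal s,t-separator with T_s ⊆ N_G(s)∖N_G[t]. Then for any two connected components C_1, C_2 of G−T_s other than C_s(G−T_s), either N_G(C_1) ⊆ N_G(C_2) or N_G(C_2) ⊆ N_G(C_1). -/
variable {V : Type*}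

section MyHelpers

variable {G : SimpleGraph V} {S : Set V}

lemma my_reach_left {u v : V} (h : ReachAvoid G S u v) : u ∉ S := by
  obtain ⟨w, hw⟩ := h; exact hw u w.start_mem_support

lemma my_reach_right {u v : V} (h : ReachAvoid G S u v) : v ∉ S := by
  obtain ⟨w, hw⟩ := h; exact hw v w.end_mem_support

lemma my_reach_refl {u : V} (h : u ∉ S) : ReachAvoid G S u u :=
  ⟨SimpleGraph.Walk.nil, by
    intro x hx
    simp only [SimpleGraph.Walk.support_nil, List.mem_singleton] at hx
    exact hx ▸ h⟩

lemma my_reach_symm {u v : V} (h : ReachAvoid G S u v) : ReachAvoid G S v u := by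
  obtain ⟨w, hw⟩ := h
  exact ⟨w.reverse, fun x hx => hw x (by simpa using hx)⟩

lemma my_reach_trans {u v w : V} (h1 : ReachAvoid G S u v) (h2 : ReachAvoid G S v w) :
    ReachAvoid G S u w := by
  obtain ⟨p, hp⟩ := h1; obtain ⟨q, hq⟩ := h2
  refine ⟨p.append q, fun x hx => ?_⟩
  rw [SimpleGraph.Walk.mem_support_append_iff] at hx
  rcases hx with h | h
  exacts [hp x h, hq x h]

lemma my_reach_step {u v w : V} (h1 : ReachAvoid G S u v) (h2 : G.Adj v w) (hw : w ∉ S) :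
    ReachAvoid G S u w := by
  refine my_reach_trans h1 ⟨SimpleGraph.Walk.cons h2 SimpleGraph.Walk.nil, ?_⟩
  intro x hx
  simp only [SimpleGraph.Walk.support_cons, SimpleGraph.Walk.support_nil,
    List.mem_cons, List.mem_singleton, List.not_mem_nil] at hx
  rcases hx with rfl | rfl | h
  · exact my_reach_right h1
  · exact hw
  · exact absurd h (by simp)

lemma my_mem_compOf_self {u : V} (h : u ∉ S) : u ∈ compOf G S u := my_reach_refl h

lemma my_compOf_eq {u v : V} (h : v ∈ compOf G S u) : compOf G S u = compOf G S v := by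
  ext z
  exact ⟨fun hz => my_reach_trans (my_reach_symm h) hz, fun hz => my_reach_trans h hz⟩

lemma my_compOf_not_mem {u v : V} (h : v ∈ compOf G S u) : v ∉ S := my_reach_right h

lemma my_nbhd_compOf_subset {u : V} : nbhd G (compOf G S u) ⊆ S := by
  rintro x ⟨hx, a, ha, hadj⟩
  by_contra hxS
  exact hx (my_reach_step ha hadj hxS)

lemma my_exists_walk_minSep {s t : V} {Ts : Set V} (hTs : IsMinSep G s t Ts)
    {x : V} (hx : x ∈ Ts) :
    ∃ w : G.Walk x t, ∀ z ∈ w.support, z = x ∨ z ∈ compOf G Ts t := by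
  classical
  have hs : s ∉ Ts := hTs.1.1
  have ht : t ∉ Ts := hTs.1.2.1
  have hsub : Ts \ {x} ⊂ Ts := Set.sdiff_singleton_ssubset.mpr hx
  have hnot := hTs.2 _ hsub
  have hreach : ReachAvoid G (Ts \ {x}) s t := by
    by_contra h
    exact hnot ⟨fun hs' => hs hs'.1, fun ht' => ht ht'.1, h⟩
  obtain ⟨w, hw⟩ := hreach
  have hxw : x ∈ w.support := by
    by_contra hxw
    exact hTs.1.2.2 ⟨w, fun z hz hzT => hw z hz ⟨hzT, fun h => hxw (h ▸ hz)⟩⟩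
  set p := w.dropUntil x hxw with hp
  have hpsup : ∀ z ∈ p.support, z ∉ Ts \ {x} := fun z hz =>
    hw z (SimpleGraph.Walk.support_dropUntil_subset w hxw hz)
  set q := p.reverse with hqdef
  have hxq : x ∈ q.support := by
    simp only [hqdef, SimpleGraph.Walk.support_reverse, List.mem_reverse]
    exact p.start_mem_support
  set q' := q.takeUntil x hxq with hq'
  have hcount : q'.support.count x = 1 :=
    SimpleGraph.Walk.count_support_takeUntil_eq_one q hxq
  refine ⟨q'.reverse, ?_⟩
  intro z hz
  rw [SimpleGraph.Walk.support_reverse, List.mem_reverse] at hz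
  by_cases hzx : z = x
  · exact Or.inl hzx
  · right
    have hxnot : x ∉ (q'.takeUntil z hz).support := by
      intro hmem
      have hspec := SimpleGraph.Walk.take_spec q' hz
      have hxend : x ∈ (q'.dropUntil z hz).support := SimpleGraph.Walk.end_mem_support _
      have hxtail : x ∈ (q'.dropUntil z hz).support.tail := by
        have hc := SimpleGraph.Walk.support_eq_cons (q'.dropUntil z hz)
        rw [hc, List.mem_cons] at hxend
        rcases hxend with h | h
        · exact absurd h.symm hzx
        · exact h
      have hge : 2 ≤ q'.support.count x := by
        conv_rhs => rw [← hspec]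
        rw [SimpleGraph.Walk.support_append, List.count_append]
        have h1 : 1 ≤ ((q'.takeUntil z hz).support).count x :=
          List.count_pos_iff.mpr hmem
        have h2 : 1 ≤ ((q'.dropUntil z hz).support.tail).count x :=
          List.count_pos_iff.mpr hxtail
        omega
      omega
    refine ⟨q'.takeUntil z hz, ?_⟩
    intro u hu huT
    have hune : u ≠ x := fun h => hxnot (h ▸ hu)
    have huq' : u ∈ q'.support := SimpleGraph.Walk.support_takeUntil_subset q' hz hu
    have hup : u ∈ p.support := by
      have := SimpleGraph.Walk.support_takeUntil_subset q hxq huq'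
      simpa [hqdef, SimpleGraph.Walk.support_reverse] using this
    exact hpsup u hup ⟨huT, hune⟩

lemma my_minSep_subset_nbhd {s t : V} {Ts : Set V} (hTs : IsMinSep G s t Ts) :
    Ts ⊆ nbhd G (compOf G Ts t) := by
  intro x hx
  obtain ⟨w, hw⟩ := my_exists_walk_minSep hTs hx
  have hxt : x ≠ t := fun h => hTs.1.2.1 (h ▸ hx)
  cases w with
  | nil => exact absurd rfl hxt
  | @cons _ u _ h p =>
    refine ⟨fun hc => my_compOf_not_mem hc hx, u, ?_, h.symm⟩
    have hu : u ∈ (SimpleGraph.Walk.cons h p).support := by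
      simp [SimpleGraph.Walk.support_cons]
    rcases hw u hu with rfl | hmem
    · exact absurd h (G.loopless.irrefl u)
    · exact hmem

end MyHelpers

theorem stmt10 (G : SimpleGraph V) (hconn : G.Connected) (hat : IsATFree G)
    (s t : V) (hst : s ≠ t) (hadj : ¬ G.Adj s t)
    (Ts : Set V) (hTs : IsMinSep G s t Ts)
    (hTsN : Ts ⊆ G.neighborSet s \ clNbhd G t)
    (c₁ c₂ : V) (hc₁ : c₁ ∉ Ts) (hc₂ : c₂ ∉ Ts)
    (h₁ : s ∉ compOf G Ts c₁) (h₂ : s ∉ compOf G Ts c₂) :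
    nbhd G (compOf G Ts c₁) ⊆ nbhd G (compOf G Ts c₂) ∨
    nbhd G (compOf G Ts c₂) ⊆ nbhd G (compOf G Ts c₁) := by
  classical
  have hsS : s ∉ Ts := hTs.1.1
  have htS : t ∉ Ts := hTs.1.2.1
  have hsubN : Ts ⊆ nbhd G (compOf G Ts t) := my_minSep_subset_nbhd hTs
  by_cases ht1 : t ∈ compOf G Ts c₁
  · right
    rw [my_compOf_eq ht1]
    exact fun x hx => hsubN (my_nbhd_compOf_subset hx)
  by_cases ht2 : t ∈ compOf G Ts c₂
  · left
    rw [my_compOf_eq ht2]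
    exact fun x hx => hsubN (my_nbhd_compOf_subset hx)
  by_cases hsame : c₂ ∈ compOf G Ts c₁
  · left; rw [my_compOf_eq hsame]
  by_contra hcon
  push_neg at hcon
  obtain ⟨hn1, hn2⟩ := hcon
  obtain ⟨x, hx1, hx2⟩ := Set.not_subset.mp hn1
  obtain ⟨y, hy1, hy2⟩ := Set.not_subset.mp hn2
  have hxTs : x ∈ Ts := my_nbhd_compOf_subset hx1
  have hyTs : y ∈ Ts := my_nbhd_compOf_subset hy1
  obtain ⟨hxC1, a, haC1, hax⟩ := hx1
  obtain ⟨hyC2, b, hbC2, hby⟩ := hy1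
  -- disjointness facts
  have hdis12 : ∀ z, z ∈ compOf G Ts c₁ → z ∈ compOf G Ts c₂ → False := by
    intro z h1 h2
    exact hsame ((my_compOf_eq h1).symm ▸ (my_compOf_eq h2).symm ▸
      my_mem_compOf_self hc₂)
  have hdis1t : ∀ z, z ∈ compOf G Ts c₁ → z ∈ compOf G Ts t → False := by
    intro z h1 h2
    exact ht1 ((my_compOf_eq h1).symm ▸ (my_compOf_eq h2).symm ▸
      my_mem_compOf_self htS)
  have hdis2t : ∀ z, z ∈ compOf G Ts c₂ → z ∈ compOf G Ts t → False := by
    intro z h1 h2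
    exact ht2 ((my_compOf_eq h1).symm ▸ (my_compOf_eq h2).symm ▸
      my_mem_compOf_self htS)
  -- properties of x and y from hTsN
  obtain ⟨hsx, hxcl⟩ := hTsN hxTs
  obtain ⟨hsy, hycl⟩ := hTsN hyTs
  have hxt : x ≠ t := fun h => hxcl (Or.inl h)
  have hxtadj : ¬ G.Adj t x := fun h => hxcl (Or.inr h)
  have hyt : y ≠ t := fun h => hycl (Or.inl h)
  have hytadj : ¬ G.Adj t y := fun h => hycl (Or.inr h)
  have haS : a ∉ Ts := my_compOf_not_mem haC1
  have hbS : b ∉ Ts := my_compOf_not_mem hbC2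
  -- nonadjacencies
  have hab : ¬ G.Adj a b := fun h => hdis12 b (my_reach_step haC1 h hbS) hbC2
  have hta : ¬ G.Adj t a := fun h => ht1 (my_reach_step haC1 h.symm htS)
  have htb : ¬ G.Adj t b := fun h => ht2 (my_reach_step hbC2 h.symm htS)
  have hanet : a ≠ t := fun h => ht1 (h ▸ haC1)
  have hbnet : b ≠ t := fun h => ht2 (h ▸ hbC2)
  have haneb : a ≠ b := fun h => hdis12 a haC1 (h ▸ hbC2)
  have hbx : ¬ G.Adj b x := by
    intro h
    exact hx2 ⟨fun hc => my_compOf_not_mem hc hxTs, b, hbC2, h⟩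
  have hay : ¬ G.Adj a y := by
    intro h
    exact hy2 ⟨fun hc => my_compOf_not_mem hc hyTs, a, haC1, h⟩
  have hbneTs : ∀ z ∈ compOf G Ts c₂, z ≠ x := fun z hz h =>
    my_compOf_not_mem hz (h ▸ hxTs)
  -- walks from x and y to t through the t-component
  obtain ⟨wx, hwx⟩ := my_exists_walk_minSep hTs hxTs
  obtain ⟨wy, hwy⟩ := my_exists_walk_minSep hTs hyTs
  refine hat ⟨a, b, t, haneb, hanet, hbnet, hab, fun h => hta h.symm, fun h => htb h.symm,
    ?_, ?_, ?_⟩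
  · -- walk a - x - s - y - b avoiding clNbhd t
    refine ⟨SimpleGraph.Walk.cons hax (SimpleGraph.Walk.cons hsx.symm
      (SimpleGraph.Walk.cons hsy.symm.symm (SimpleGraph.Walk.cons hby.symm SimpleGraph.Walk.nil))), ?_⟩
    intro z hz
    simp only [SimpleGraph.Walk.support_cons, SimpleGraph.Walk.support_nil,
      List.mem_cons, List.mem_singleton, List.not_mem_nil, or_false] at hz
    have goal : ∀ u : V, u ≠ t → ¬ G.Adj t u → u ∉ clNbhd G t := by
      rintro u h1 h2 (h | h)
      · exact h1 h
      · exact h2 h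
    rcases hz with rfl | rfl | rfl | rfl | rfl
    · exact goal z hanet hta
    · exact goal z hxt hxtadj
    · exact goal z hst fun h => hadj h.symm
    · exact goal z hyt hytadj
    · exact goal z hbnet htb
  · -- walk a - x - ... - t avoiding clNbhd b
    refine ⟨SimpleGraph.Walk.cons hax wx, ?_⟩
    intro z hz
    simp only [SimpleGraph.Walk.support_cons, List.mem_cons] at hz
    have goal : ∀ u : V, u ≠ b → ¬ G.Adj b u → u ∉ clNbhd G b := by
      rintro u h1 h2 (h | h)
      · exact h1 h
      · exact h2 h
    rcases hz with rfl | hz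
    · exact goal z haneb fun h => hab h.symm
    · rcases hwx z hz with rfl | hzt
      · exact goal z (fun h => my_compOf_not_mem (h ▸ hbC2) hxTs) hbx
      · refine goal z (fun h => hdis2t b hbC2 (h ▸ hzt)) ?_
        intro h
        exact hdis2t z (my_reach_step hbC2 h (my_compOf_not_mem hzt)) hzt
  · -- walk b - y - ... - t avoiding clNbhd a
    refine ⟨SimpleGraph.Walk.cons hby wy, ?_⟩
    intro z hz
    simp only [SimpleGraph.Walk.support_cons, List.mem_cons] at hz
    have goal : ∀ u : V, u ≠ a → ¬ G.Adj a u → u ∉ clNbhd G a := by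
      rintro u h1 h2 (h | h)
      · exact h1 h
      · exact h2 h
    rcases hz with rfl | hz
    · exact goal z (Ne.symm haneb) hab
    · rcases hwy z hz with rfl | hzt
      · exact goal z (fun h => my_compOf_not_mem (h ▸ haC1) hyTs) hay
      · refine goal z (fun h => hdis1t a haC1 (h ▸ hzt)) ?_
        intro h
        exact hdis1t z (my_reach_step haC1 h (my_compOf_not_mem hzt)) hzt
end

section
/- Let G be a connected AT-free graph with nonadjacent vertices s,t, A ⊆ V(G)∖{s,t}, and assume: every a ∈ A has an s,a-path in G avoiding N_G[t] and an a,t-path in G avoiding N_G[s]. Let S_1 be a minimal sA,t-separator (separating {s}∪A from t) of G, let C_s and C_t be the components of G−S_1 containing s and t, and let Q_s := N_G(C_s) ∩ N_G(C_t). Then Q_s is a minimal s,t-separator of G, and for every a ∈ A with a ∉ C_s it holds that Q_s ⊆ N_G(a). -/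
variable {V : Type*}

section Aux
variable {V : Type*} {G : SimpleGraph V}

lemma reachAvoid_symm {S : Set V} {u v : V} (h : ReachAvoid G S u v) : ReachAvoid G S v u := by
  obtain ⟨w, hw⟩ := h
  exact ⟨w.reverse, fun x hx => hw x (by simpa using hx)⟩

lemma compOf_not_mem {S : Set V} {s v : V} (h : v ∈ compOf G S s) : v ∉ S := by
  obtain ⟨w, hw⟩ := h
  exact hw v w.end_mem_support

lemma mem_compOf_self {S : Set V} {s : V} (hs : s ∉ S) : s ∈ compOf G S s :=
  ⟨SimpleGraph.Walk.nil, by simp [hs]⟩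

lemma compOf_closed {S : Set V} {s u y : V} (hu : u ∈ compOf G S s) (h : G.Adj u y)
    (hy : y ∉ S) : y ∈ compOf G S s := by
  obtain ⟨w, hw⟩ := hu
  refine ⟨w.concat h, fun x hx => ?_⟩
  rw [SimpleGraph.Walk.support_concat] at hx
  rw [List.mem_append, List.mem_singleton] at hx
  rcases hx with hx | rfl
  · exact hw x hx
  · exact hy

lemma compOf_walk {S : Set V} {s u : V} (hu : u ∈ compOf G S s) :
    ∃ w : G.Walk s u, ∀ z ∈ w.support, z ∈ compOf G S s := by
  classical
  obtain ⟨w, hw⟩ := hu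
  exact ⟨w, fun z hz => ⟨w.takeUntil z hz,
    fun x hx => hw x (w.support_takeUntil_subset hz hx)⟩⟩

lemma walk_avoid_lemma {S C : Set V} {v : V}
    (hCS : ∀ c ∈ C, c ∉ S)
    (hcl : ∀ ⦃c y : V⦄, c ∈ C → G.Adj c y → y ∉ S → y ∈ C) :
    ∀ {u x : V} (w : G.Walk u x), u ∈ C → (∀ z ∈ w.support, z ∉ S \ {v}) →
      x ∈ C ∨ v ∈ nbhd G C := by
  intro u x w
  induction w with
  | nil => exact fun hu _ => Or.inl hu
  | @cons a b c h p ih =>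
    intro hu havoid
    by_cases hb : b ∈ S
    · have hbv : b = v := by
        have h2 := havoid b (by simp)
        simp only [Set.mem_diff, Set.mem_singleton_iff, not_and, not_not] at h2
        exact h2 hb
      subst hbv
      exact Or.inr ⟨fun hvC => hCS b hvC hb, a, hu, h⟩
    · exact ih (hcl hu h hb) (fun z hz => havoid z (by simp [hz]))

lemma walk_crosses {C : Set V} :
    ∀ {u x : V} (w : G.Walk u x), u ∈ C → x ∉ C → ∃ z ∈ w.support, z ∈ nbhd G C := by
  intro u x w
  induction w with
  | nil => exact fun hu hx => absurd hu hx
  | @cons a b c h p ih =>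
    intro hu hx
    by_cases hb : b ∈ C
    · obtain ⟨z, hz, hznb⟩ := ih hb hx
      exact ⟨z, by simp [hz], hznb⟩
    · exact ⟨b, by simp, hb, a, hu, h⟩

lemma cross_walk {S : Set V} {s t v : V}
    (hv1 : v ∈ nbhd G (compOf G S s)) (hv2 : v ∈ nbhd G (compOf G S t)) :
    ∃ w : G.Walk s t,
      ∀ z ∈ w.support, z ∈ compOf G S s ∨ z = v ∨ z ∈ compOf G S t := by
  obtain ⟨hvCs, cs, hcs, hacs⟩ := hv1
  obtain ⟨hvCt, ct, hct, hact⟩ := hv2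
  obtain ⟨w1, hw1⟩ := compOf_walk hcs
  obtain ⟨w2, hw2⟩ := compOf_walk hct
  refine ⟨w1.append (SimpleGraph.Walk.cons hacs
    (SimpleGraph.Walk.cons hact.symm w2.reverse)), fun z hz => ?_⟩
  rw [SimpleGraph.Walk.mem_support_append_iff] at hz
  rcases hz with hz | hz
  · exact Or.inl (hw1 z hz)
  · simp only [SimpleGraph.Walk.support_cons, List.mem_cons] at hz
    rcases hz with rfl | rfl | hz
    · exact Or.inl hcs
    · exact Or.inr (Or.inl rfl)
    · exact Or.inr (Or.inr (hw2 z (by simpa using hz)))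

end Aux

theorem stmt14 (G : SimpleGraph V) (hconn : G.Connected) (hat : IsATFree G)
    (s t : V) (hst : s ≠ t) (hadj : ¬ G.Adj s t)
    (A : Set V) (hsA : s ∉ A) (htA : t ∉ A)
    (hpath1 : ∀ a ∈ A, ∃ w : G.Walk s a, ∀ x ∈ w.support, x ∉ clNbhd G t)
    (hpath2 : ∀ a ∈ A, ∃ w : G.Walk a t, ∀ x ∈ w.support, x ∉ clNbhd G s)
    (S₁ : Set V) (hS₁ : IsMinABSep G (insert s A) {t} S₁) :
    IsMinSep G s t (nbhd G (compOf G S₁ s) ∩ nbhd G (compOf G S₁ t)) ∧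
    ∀ a ∈ A, a ∉ compOf G S₁ s →
      nbhd G (compOf G S₁ s) ∩ nbhd G (compOf G S₁ t) ⊆ G.neighborSet a := by
  classical
  set Cs := compOf G S₁ s with hCsdef
  set Ct := compOf G S₁ t with hCtdef
  -- basic membership facts
  have hSsub : S₁ ⊆ (insert s A ∪ {t})ᶜ := hS₁.1.1
  have hsS : s ∉ S₁ := fun h => hSsub h (Or.inl (Set.mem_insert s A))
  have htS : t ∉ S₁ := fun h => hSsub h (Or.inr rfl)
  have hsep : ∀ x ∈ insert s A, ¬ ReachAvoid G S₁ x t := by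
    intro x hx
    exact hS₁.1.2 x hx t rfl
  have hsCs : s ∈ Cs := mem_compOf_self hsS
  have htCt : t ∈ Ct := mem_compOf_self htS
  have htCs : t ∉ Cs := fun h => hsep s (Set.mem_insert s A) h
  -- closure properties
  have hclCs : ∀ ⦃c y : V⦄, c ∈ Cs → G.Adj c y → y ∉ S₁ → y ∈ Cs :=
    fun c y hc ha hy => compOf_closed hc ha hy
  have hclCt : ∀ ⦃c y : V⦄, c ∈ Ct → G.Adj c y → y ∉ S₁ → y ∈ Ct :=
    fun c y hc ha hy => compOf_closed hc ha hy
  have hCsS : ∀ c ∈ Cs, c ∉ S₁ := fun c hc => compOf_not_mem hc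
  have hCtS : ∀ c ∈ Ct, c ∉ S₁ := fun c hc => compOf_not_mem hc
  -- minimality of S₁ : every v ∈ S₁ is in nbhd G Ct
  have hS₁Ct : S₁ ⊆ nbhd G Ct := by
    intro v hv
    have hssub : S₁ \ {v} ⊂ S₁ := by
      constructor
      · exact Set.diff_subset
      · intro hsub
        exact (hsub hv).2 rfl
    have hnot := hS₁.2 _ hssub
    rw [IsABSep, not_and_or] at hnot
    rcases hnot with hnot | hnot
    · exact absurd (fun x hx => hSsub (Set.diff_subset hx)) hnot
    · push_neg at hnot
      obtain ⟨x, hx, b, hb, hreach⟩ := hnot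
      rcases hb with rfl
      obtain ⟨w, hw⟩ := hreach
      have hres := walk_avoid_lemma (G := G) (v := v) hCtS hclCt w.reverse htCt
        (fun z hz => hw z (by simpa using hz))
      rcases hres with hres | hres
      · exact absurd (reachAvoid_symm hres) (hsep x hx)
      · exact hres
  have hnCsS : nbhd G Cs ⊆ S₁ := by
    rintro x ⟨hxCs, c, hc, hadj'⟩
    by_contra hxS
    exact hxCs (hclCs hc hadj' hxS)
  have hnCtS : nbhd G Ct ⊆ S₁ := by
    rintro x ⟨hxCt, c, hc, hadj'⟩
    by_contra hxS
    exact hxCt (hclCt hc hadj' hxS)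
  have hQeq : nbhd G Cs ∩ nbhd G Ct = nbhd G Cs :=
    Set.inter_eq_left.mpr (fun x hx => hS₁Ct (hnCsS hx))
  set Q := nbhd G Cs ∩ nbhd G Ct with hQdef
  have hQS : Q ⊆ S₁ := fun x hx => hnCsS hx.1
  have hsQ : s ∉ Q := fun h => h.1.1 hsCs
  have htQ : t ∉ Q := fun h => htS (hQS h)
  have hCsQ : ∀ c ∈ Cs, c ∉ Q := fun c hc hq => hCsS c hc (hQS hq)
  have hCtQ : ∀ c ∈ Ct, c ∉ Q := fun c hc hq => hCtS c hc (hQS hq)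
  have hsepQ : IsSep G s t Q := by
    refine ⟨hsQ, htQ, fun ⟨w, hw⟩ => ?_⟩
    obtain ⟨z, hz, hznb⟩ := walk_crosses w hsCs htCs
    exact hw z hz ⟨hznb, hS₁Ct (hnCsS hznb)⟩
  refine ⟨⟨hsepQ, ?_⟩, ?_⟩
  · -- minimality of Q
    intro S' hS' hsep'
    obtain ⟨v, hvQ, hvS'⟩ := Set.exists_of_ssubset hS'
    obtain ⟨w, hw⟩ := cross_walk hvQ.1 hvQ.2
    refine hsep'.2.2 ⟨w, fun z hz => ?_⟩
    intro hzS'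
    have hzQ : z ∈ Q := hS'.1 hzS'
    rcases hw z hz with hzc | rfl | hzc
    · exact hCsQ z hzc hzQ
    · exact hvS' hzS'
    · exact hCtQ z hzc hzQ
  · -- second part
    intro a ha haCs v hvQ
    by_contra hav
    have haS : a ∉ S₁ := fun h => hSsub h (Or.inl (Set.mem_insert_of_mem s ha))
    have haCt : a ∉ Ct := fun h =>
      hsep a (Set.mem_insert_of_mem s ha) (reachAvoid_symm h)
    have hsa : ¬ G.Adj s a := fun h => haCs (hclCs hsCs h haS)
    have hat' : ¬ G.Adj a t := fun h =>
      hsep a (Set.mem_insert_of_mem s ha) ⟨SimpleGraph.Walk.cons h SimpleGraph.Walk.nil,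
        by intro x hx; simp at hx; rcases hx with rfl | rfl <;> assumption⟩
    have hva : v ≠ a := fun h => haS (h ▸ hQS hvQ)
    obtain ⟨w, hw⟩ := cross_walk hvQ.1 hvQ.2
    have hwavoid : ∀ z ∈ w.support, z ∉ clNbhd G a := by
      intro z hz hcl
      have hcl' : z = a ∨ G.Adj a z := by
        rcases hcl with h | h
        · exact Or.inl h
        · exact Or.inr h
      rcases hw z hz with hzc | rfl | hzc
      · rcases hcl' with rfl | hadj'
        · exact haCs hzc
        · exact haCs (hclCs hzc hadj'.symm haS)
      · rcases hcl' with rfl | hadj'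
        · exact hva rfl
        · exact hav hadj'
      · rcases hcl' with rfl | hadj'
        · exact haCt hzc
        · exact haCt (hclCt hzc hadj'.symm haS)
    obtain ⟨w1, hw1⟩ := hpath1 a ha
    obtain ⟨w2, hw2⟩ := hpath2 a ha
    exact hat ⟨s, a, t, fun h => hsA (h ▸ ha), hst, fun h => htA (h ▸ ha),
      hsa, hadj, hat', ⟨w1, hw1⟩, ⟨w, hwavoid⟩, ⟨w2, hw2⟩⟩
end
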